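/- If N ≥ 2 and d ≥ max{63, 46N−79}, then for all d+2 ≤ n ≤ 7d+13, q_d^{(1)}(n) ≥ Q_{d−N}^{(1,−)}(n). -/

import Mathlib

/-- `rho A n` is the number of partitions of `n` all of whose parts lie in `A`. -/
noncomputable def rho (A : Set ℕ) (n : ℕ) : ℕ :=
  Nat.card {p : n.Partition // ∀ x ∈ p.parts, x ∈ A}

/-- `qpart a d n` is the number of partitions of `n` into parts that are all `≥ a`
and pairwise differ by at least `d` (so, in particular, are distinct when `d ≥ 1`). -/
noncomputable def qpart (a d n : ℕ) : ℕ :=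
  Nat.card {p : n.Partition //
    (∀ x ∈ p.parts, a ≤ x) ∧
    (∀ x ∈ p.parts, p.parts.count x ≤ 1) ∧
    (∀ x ∈ p.parts, ∀ y ∈ p.parts, x ≠ y → d ≤ max x y - min x y)}

/-- Positive integers congruent to `±a` modulo `m`, excluding `m - a`. -/
noncomputable def QminusSet (a m : ℕ) : Set ℕ :=
  {x | x % m = a % m ∨ x % m = (m - a) % m} \ {m - a}

/-- `Qminus a d n` counts partitions of `n` into parts `≡ ±a (mod d+3)`,
excluding the part `d+3-a`. -/
noncomputable def Qminus (a d n : ℕ) : ℕ := rho (QminusSet a (d + 3)) n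

/-- `Qmm a d n` counts partitions of `n` into parts `≡ ±a (mod d+3)`,
excluding both the parts `a` and `d+3-a`. -/
noncomputable def Qmm (a d n : ℕ) : ℕ := rho (QminusSet a (d + 3) \ {a}) n

/-- `Tset s d` is the set of naturals congruent to `1` or to `d + 2^j` for some
`1 ≤ j ≤ s - 1` modulo `2d`. -/
def Tset (s d : ℕ) : Set ℕ :=
  {y | y % (2 * d) = 1 % (2 * d) ∨
    ∃ j, 1 ≤ j ∧ j + 1 ≤ s ∧ y % (2 * d) = (d + 2 ^ j) % (2 * d)}

/-- `T5 d` : naturals congruent to `1, d+2, d+4, d+8` or `d+16` modulo `2d`. -/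
def T5 (d : ℕ) : Set ℕ := Tset 5 d

/-- `Sset d N` : naturals congruent to `±1` modulo `d-N+3`, excluding `d-N+2`. -/
def Sset (d N : ℕ) : Set ℕ :=
  {x | x % (d - N + 3) = 1 % (d - N + 3) ∨ x % (d - N + 3) = (d - N + 2) % (d - N + 3)}
    \ {d - N + 2}

/-- `xN d N i` is the `i`-th smallest element of `Sset d N` (1-indexed). -/
noncomputable def xN (d N i : ℕ) : ℕ := Nat.nth (· ∈ Sset d N) (i - 1)

/-- `yT d i` is the `i`-th smallest element of `T5 d` (1-indexed). -/
noncomputable def yT (d i : ℕ) : ℕ := Nat.nth (· ∈ T5 d) (i - 1)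

/-! Auxiliary machinery for stmt7 -/

def qwsum (l : List ℕ) : ℕ := (l.map (· / 2)).sum

def qgen : ℕ → ℕ → ℕ → List (List ℕ)
  | 0, _, _ => [[]]
  | fuel+1, lo, w =>
    [] :: (List.range' lo (16 - lo)).flatMap (fun c =>
      if 1 ≤ c / 2 ∧ c / 2 ≤ w then (qgen fuel c (w - c / 2)).map (c :: ·) else [])

def qLblock (k : ℕ) : List (List ℕ) := (qgen 7 3 k).filter (fun l => qwsum l = k)

def qLle (w : ℕ) : List (List ℕ) := (List.range' 1 w).flatMap qLblock

def qL7 : List (List ℕ) := qLle 7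

def qfind : List (List ℕ) → List ℕ → ℕ
  | [], _ => 0
  | b :: L, a => if b = a then 0 else qfind L a + 1

lemma qfind_lt_of_mem_take (a : List ℕ) : ∀ (L : List (List ℕ)) (k : ℕ),
    a ∈ L.take k → qfind L a < k := by
  intro L
  induction L with
  | nil => intro k h; simp at h
  | cons b L ih =>
    intro k h
    cases k with
    | zero => simp at h
    | succ k =>
      rw [List.take_succ_cons] at h
      by_cases hb : b = a
      · simp only [qfind, if_pos hb]; omega
      · simp only [qfind, if_neg hb]
        rcases List.mem_cons.1 h with h' | h'
        · exact absurd h'.symm hb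
        · exact Nat.succ_lt_succ (ih k h')

lemma qfind_getElem? (a : List ℕ) : ∀ (L : List (List ℕ)), a ∈ L →
    L[qfind L a]? = some a := by
  intro L
  induction L with
  | nil => intro h; simp at h
  | cons b L ih =>
    intro h
    by_cases hb : b = a
    · subst hb; simp [qfind]
    · have h' : a ∈ L := by
        rcases List.mem_cons.1 h with h' | h'
        · exact absurd h'.symm hb
        · exact h'
      simp only [qfind, if_neg hb]
      rw [List.getElem?_cons_succ]
      exact ih h'

lemma mem_qgen : ∀ (l : List ℕ) (fuel lo w : ℕ), 3 ≤ lo →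
    l.Pairwise (· ≤ ·) → (∀ x ∈ l, lo ≤ x ∧ x ≤ 15) → qwsum l ≤ w → w ≤ fuel →
    l ∈ qgen fuel lo w := by
  intro l
  induction l with
  | nil =>
    intro fuel lo w _ _ _ _ _
    cases fuel <;> simp [qgen]
  | cons a r ih =>
    intro fuel lo w hlo hsort hb hw hwf
    have ha := hb a (by simp)
    have ha2 : 1 ≤ a / 2 := by omega
    have hwsum : qwsum (a :: r) = a / 2 + qwsum r := by simp [qwsum]
    cases fuel with
    | zero => omega
    | succ f =>
      rw [qgen]
      apply List.mem_cons_of_mem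
      rw [List.mem_flatMap]
      refine ⟨a, ?_, ?_⟩
      · rw [List.mem_range'_1]; omega
      · rw [if_pos (by omega : 1 ≤ a / 2 ∧ a / 2 ≤ w), List.mem_map]
        refine ⟨r, ih f a (w - a / 2) (by omega) hsort.of_cons
          (fun x hx => ⟨List.rel_of_pairwise_cons hsort hx, (hb x (by simp [hx])).2⟩)
          (by omega) (by omega), rfl⟩

def codeF (m x : ℕ) : ℕ :=
  if (x+1) % m = 0 then 2*((x+1)/m) else 2*((x+1)/m)+1

def decodeF (m c : ℕ) : ℕ :=
  if c % 2 = 0 then (c/2)*m - 1 else (c/2)*m + 1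

lemma code_spec (m x k : ℕ) (hm : 4 ≤ m) (hk : 1 ≤ k)
    (h : x = k*m+1 ∨ x + 1 = (k+1)*m) :
    decodeF m (codeF m x) = x ∧ 3 ≤ codeF m x ∧ 1 ≤ codeF m x / 2 ∧
      codeF m x ≤ 2*(codeF m x / 2) + 1 ∧ (codeF m x / 2) * (m-1) ≤ x := by
  rcases h with h | h
  · have hx1 : x + 1 = 2 + k*m := by rw [h]; ring
    have e1 : (x+1) % m = 2 := by
      rw [hx1, Nat.add_mul_mod_self_right]; exact Nat.mod_eq_of_lt (by omega)
    have e2 : (x+1) / m = k := by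
      rw [hx1, Nat.add_mul_div_right _ _ (show 0 < m by omega),
        Nat.div_eq_of_lt (by omega), Nat.zero_add]
    have hc : codeF m x = 2*k+1 := by simp [codeF, e1, e2]
    rw [hc]
    have d1 : ¬ ((2*k+1) % 2 = 0) := by omega
    have d2 : (2*k+1) / 2 = k := by omega
    refine ⟨?_, by omega, by omega, by omega, ?_⟩
    · rw [decodeF, if_neg d1, d2, ← h]
    · rw [d2]
      have key : k*(m-1) + k = k*m := by
        obtain ⟨m', rfl⟩ : ∃ m', m = m' + 1 := ⟨m - 1, by omega⟩
        rw [Nat.add_sub_cancel]; ring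
      calc k*(m-1) ≤ k*(m-1) + k := Nat.le_add_right _ _
        _ = k*m := key
        _ ≤ x := by rw [h]; exact Nat.le_add_right _ 1
  · have e1 : (x+1) % m = 0 := by rw [h]; exact Nat.mul_mod_left _ _
    have e2 : (x+1) / m = k + 1 := by
      rw [h, Nat.mul_div_cancel _ (show 0 < m by omega)]
    have hc : codeF m x = 2*(k+1) := by simp [codeF, e1, e2]
    rw [hc]
    have d2 : (2*(k+1)) / 2 = k+1 := by omega
    refine ⟨?_, by omega, by omega, by omega, ?_⟩
    · rw [decodeF, if_pos (by omega : (2*(k+1)) % 2 = 0), d2]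
      generalize hB : (k+1)*m = B at h ⊢
      omega
    · rw [d2]
      have key : (k+1)*(m-1) + (k+1) = (k+1)*m := by
        obtain ⟨m', rfl⟩ : ∃ m', m = m' + 1 := ⟨m - 1, by omega⟩
        rw [Nat.add_sub_cancel]; ring
      generalize hA : (k+1)*(m-1) = A at key ⊢
      generalize hB : (k+1)*m = B at key h
      omega

lemma qclassify (m x : ℕ) (hm : 4 ≤ m) (hx : x ∈ QminusSet 1 m) (h1 : ¬ (x = 1)) :
    ∃ k, 1 ≤ k ∧ (x = k*m+1 ∨ x + 1 = (k+1)*m) := by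
  obtain ⟨hmod, hne⟩ := hx
  simp only [Set.mem_setOf_eq] at hmod
  simp only [Set.mem_singleton_iff] at hne
  have h1m : (1:ℕ) % m = 1 := Nat.mod_eq_of_lt (by omega)
  have h2m : (m-1) % m = m-1 := Nat.mod_eq_of_lt (by omega)
  rcases hmod with h | h
  · rw [h1m] at h
    obtain ⟨q, hq⟩ : ∃ q, x = m * q + 1 :=
      ⟨x/m, by conv_lhs => rw [← Nat.div_add_mod x m]; rw [h]⟩
    cases q with
    | zero => simp at hq; exact absurd hq h1
    | succ q' =>
      refine ⟨q'+1, by omega, Or.inl ?_⟩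
      rw [hq]; ring
  · rw [h2m] at h
    obtain ⟨q, hq⟩ : ∃ q, x = m * q + (m - 1) :=
      ⟨x/m, by conv_lhs => rw [← Nat.div_add_mod x m]; rw [h]⟩
    cases q with
    | zero =>
      exfalso; apply hne; rw [hq]; ring_nf
    | succ q' =>
      refine ⟨q'+1, by omega, Or.inr ?_⟩
      have hsub : m - 1 + 1 = m := by omega
      calc x + 1 = m * (q'+1) + (m-1) + 1 := by rw [hq]
        _ = m * (q'+1) + ((m-1) + 1) := by rw [Nat.add_assoc]
        _ = m * (q'+1) + m := by rw [hsub]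
        _ = (q'+1+1)*m := by ring

lemma code_inj (m : ℕ) (hm4 : 4 ≤ m) (s₁ s₂ : Multiset ℕ)
    (h1 : ∀ x ∈ s₁, ∃ k, 1 ≤ k ∧ (x = k*m+1 ∨ x + 1 = (k+1)*m))
    (h2 : ∀ x ∈ s₂, ∃ k, 1 ≤ k ∧ (x = k*m+1 ∨ x + 1 = (k+1)*m))
    (h : s₁.map (codeF m) = s₂.map (codeF m)) : s₁ = s₂ := by
  have e : ∀ (s : Multiset ℕ), (∀ x ∈ s, ∃ k, 1 ≤ k ∧ (x = k*m+1 ∨ x + 1 = (k+1)*m)) →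
      (s.map (codeF m)).map (decodeF m) = s := by
    intro s hs
    rw [Multiset.map_map]
    calc s.map (decodeF m ∘ codeF m) = s.map id := by
          apply Multiset.map_congr rfl
          intro x hx
          obtain ⟨k, hk, hcase⟩ := hs x hx
          exact (code_spec m x k hm4 hk hcase).1
      _ = s := Multiset.map_id s
  rw [← e s₁ h1, h, e s₂ h2]

lemma parts_decomp (n : ℕ) (p : n.Partition) :
    (p.parts.filter (fun x => ¬ (x = 1))).sum ≤ n ∧
      p.parts = Multiset.replicate (n - (p.parts.filter (fun x => ¬ (x = 1))).sum) 1
        + p.parts.filter (fun x => ¬ (x = 1)) := by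
  have hsplit := Multiset.filter_add_not (fun x => x = 1) p.parts
  have hrep : p.parts.filter (fun x => x = 1) =
      Multiset.replicate (p.parts.count 1) 1 := by
    simpa using Multiset.filter_eq' p.parts 1
  have hsum : (p.parts.filter (fun x => x = 1)).sum
      + (p.parts.filter (fun x => ¬ (x = 1))).sum = n := by
    rw [← Multiset.sum_add, hsplit, p.parts_sum]
  rw [hrep] at hsplit hsum
  rw [Multiset.sum_replicate, smul_eq_mul, mul_one] at hsum
  constructor
  · omega
  · have hcount : p.parts.count 1 = n - (p.parts.filter (fun x => ¬ (x = 1))).sum := by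
      omega
    rw [← hcount]
    exact hsplit.symm

def pOne (n d : ℕ) (hn : 0 < n) :
    {p : n.Partition // (∀ x ∈ p.parts, 1 ≤ x) ∧ (∀ x ∈ p.parts, p.parts.count x ≤ 1) ∧
      (∀ x ∈ p.parts, ∀ y ∈ p.parts, x ≠ y → d ≤ max x y - min x y)} :=
  ⟨⟨{n}, fun {i} hi => by simp at hi; omega, by simp⟩,
    fun x hx => by simp at hx; omega,
    fun x hx => by
      simp only [Multiset.count_singleton]
      split_ifs <;> omega,
    fun x hx y hy hxy => by
      simp at hx hy
      exact absurd (hx.trans hy.symm) hxy⟩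

def pTwo (n d t : ℕ) (hd : 1 ≤ d) (h1 : 1 ≤ t) (h2 : 2*t + d ≤ n) :
    {p : n.Partition // (∀ x ∈ p.parts, 1 ≤ x) ∧ (∀ x ∈ p.parts, p.parts.count x ≤ 1) ∧
      (∀ x ∈ p.parts, ∀ y ∈ p.parts, x ≠ y → d ≤ max x y - min x y)} :=
  ⟨⟨{t, n - t}, fun {i} hi => by simp at hi; omega, by
      simp only [Multiset.insert_eq_cons, Multiset.sum_cons, Multiset.sum_singleton]
      omega⟩,
    fun x hx => by simp at hx; omega,
    fun x hx => by
      simp only [Multiset.insert_eq_cons, Multiset.count_cons, Multiset.count_singleton]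
      split_ifs <;> omega,
    fun x hx y hy hxy => by
      simp at hx hy
      rcases hx with rfl | rfl <;> rcases hy with rfl | rfl <;> omega⟩

lemma main_aux (d N n m : ℕ) (hN : 2 ≤ N) (hd63 : 63 ≤ d) (hdN : 46*N ≤ d + 79)
    (hm : m = d - N + 3) (hn1 : d + 2 ≤ n) (hn2 : n ≤ 7*d+13)
    (s : Multiset ℕ)
    (hcl : ∀ x ∈ s, ∃ k, 1 ≤ k ∧ (x = k*m+1 ∨ x + 1 = (k+1)*m))
    (hsum : s.sum ≤ n) (hne : s ≠ 0) :
    Multiset.sort (s.map (codeF m)) (· ≤ ·) ∈ qL7 ∧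
      2 * (qfind qL7 (Multiset.sort (s.map (codeF m)) (· ≤ ·)) + 1) + d ≤ n := by
  have hm4 : 4 ≤ m := by omega
  set l := Multiset.sort (s.map (codeF m)) (· ≤ ·) with hl
  have hls : (↑l : Multiset ℕ) = s.map (codeF m) := Multiset.sort_eq _ _
  have hspec : ∀ c ∈ l, 3 ≤ c ∧ 1 ≤ c/2 ∧ c ≤ 2*(c/2)+1 := by
    intro c hc
    have hc' : c ∈ s.map (codeF m) := by rw [← hls]; exact Multiset.mem_coe.2 hc
    obtain ⟨x, hx, rfl⟩ := Multiset.mem_map.1 hc'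
    obtain ⟨k, hk, hcase⟩ := hcl x hx
    have h := code_spec m x k hm4 hk hcase
    exact ⟨h.2.1, h.2.2.1, h.2.2.2.1⟩
  have hwl : qwsum l = (s.map (fun x => codeF m x / 2)).sum := by
    calc qwsum l = ((l.map (· / 2) : List ℕ) : Multiset ℕ).sum := (Multiset.sum_coe _).symm
      _ = ((↑l : Multiset ℕ).map (· / 2)).sum := by rw [Multiset.map_coe]
      _ = ((s.map (codeF m)).map (· / 2)).sum := by rw [hls]
      _ = (s.map (fun x => codeF m x / 2)).sum := by rw [Multiset.map_map]; rfl
  have hWn : (m - 1) * qwsum l ≤ n := by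
    have hpt : ∀ x ∈ s, (m-1) * (codeF m x / 2) ≤ x := by
      intro x hx
      obtain ⟨k, hk, hcase⟩ := hcl x hx
      have h := (code_spec m x k hm4 hk hcase).2.2.2.2
      calc (m-1) * (codeF m x / 2) = (codeF m x / 2) * (m-1) := Nat.mul_comm _ _
        _ ≤ x := h
    calc (m-1) * qwsum l = (s.map (fun x => (m-1) * (codeF m x / 2))).sum := by
          rw [hwl, ← Multiset.sum_map_mul_left]
      _ ≤ (s.map id).sum := Multiset.sum_map_le_sum_map _ _ hpt
      _ = s.sum := by rw [Multiset.map_id]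
      _ ≤ n := hsum
  have hlne : l ≠ [] := by
    intro h0
    apply hne
    have h1 : s.map (codeF m) = 0 := by rw [← hls, h0]; rfl
    simpa using h1
  have hW1 : 1 ≤ qwsum l := by
    obtain ⟨c, hc⟩ := List.exists_mem_of_ne_nil l hlne
    have h3 := (hspec c hc).2.1
    have hle : c/2 ≤ qwsum l :=
      List.single_le_sum (fun _ _ => Nat.zero_le _) _ (List.mem_map_of_mem hc)
    omega
  have hW7 : qwsum l ≤ 7 := by
    by_contra hcon
    have h8 : 8 ≤ qwsum l := by omega
    have h9 : (m-1) * 8 ≤ (m-1) * qwsum l := Nat.mul_le_mul_left _ h8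
    have h10 : (m-1) * 8 ≤ n := le_trans h9 hWn
    omega
  have hmemgen : l ∈ qgen 7 3 (qwsum l) := by
    apply mem_qgen l 7 3 (qwsum l) (by omega) (Multiset.pairwise_sort _ _) _ le_rfl hW7
    intro c hc
    have h := hspec c hc
    have hle : c/2 ≤ qwsum l :=
      List.single_le_sum (fun _ _ => Nat.zero_le _) _ (List.mem_map_of_mem hc)
    omega
  have hblock : l ∈ qLblock (qwsum l) := by
    simp only [qLblock, List.mem_filter]
    exact ⟨hmemgen, by simp⟩
  have hmemLle : ∀ w, qwsum l ≤ w → l ∈ qLle w := by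
    intro w hw
    simp only [qLle, List.mem_flatMap]
    exact ⟨qwsum l, by rw [List.mem_range'_1]; omega, hblock⟩
  have hL7 : l ∈ qL7 := hmemLle 7 hW7
  refine ⟨hL7, ?_⟩
  have hmem := hmemLle (qwsum l) le_rfl
  obtain ⟨W, hWdef⟩ : ∃ W, qwsum l = W := ⟨_, rfl⟩
  rw [hWdef] at hmem hWn hW1 hW7
  interval_cases W
  · have he : qLle 1 = [[3]] := by decide
    rw [he] at hmem
    simp at hmem
    rw [hmem]
    have hid : qfind qL7 [3] = 0 := by decide
    rw [hid]; omega
  · have he : qLle 2 = qL7.take 4 := by decide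
    rw [he] at hmem
    have hlt := qfind_lt_of_mem_take _ _ _ hmem
    omega
  · have he : qLle 3 = qL7.take 9 := by decide
    rw [he] at hmem
    have hlt := qfind_lt_of_mem_take _ _ _ hmem
    omega
  · have he : qLle 4 = qL7.take 19 := by decide
    rw [he] at hmem
    have hlt := qfind_lt_of_mem_take _ _ _ hmem
    omega
  · have he : qLle 5 = qL7.take 35 := by decide
    rw [he] at hmem
    have hlt := qfind_lt_of_mem_take _ _ _ hmem
    omega
  · have he : qLle 6 = qL7.take 64 := by decide
    rw [he] at hmem
    have hlt := qfind_lt_of_mem_take _ _ _ hmem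
    omega
  · have he : qLle 7 = qL7.take 109 := by decide
    rw [he] at hmem
    have hlt := qfind_lt_of_mem_take _ _ _ hmem
    omega


theorem stmt7 (N d : ℕ) (hN : 2 ≤ N) (hd : max 63 (46 * N - 79) ≤ d) :
    ∀ n, d + 2 ≤ n → n ≤ 7 * d + 13 → Qminus 1 (d - N) n ≤ qpart 1 d n := by
  intro n hn1 hn2
  have hd63 : 63 ≤ d := le_trans (le_max_left _ _) hd
  have hdN : 46 * N ≤ d + 79 := by
    have h := le_trans (le_max_right _ _) hd
    omega
  classical
  simp only [Qminus, rho, qpart]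
  set m : ℕ := d - N + 3 with hm
  have hm4 : 4 ≤ m := by omega
  have hclassify : ∀ (p : n.Partition), (∀ x ∈ p.parts, x ∈ QminusSet 1 m) →
      ∀ x ∈ p.parts.filter (fun x => ¬ (x = 1)),
        ∃ k, 1 ≤ k ∧ (x = k*m+1 ∨ x+1 = (k+1)*m) := by
    intro p hp x hx
    have h' := Multiset.mem_filter.1 hx
    exact qclassify m x hm4 (hp x h'.1) h'.2
  have key : ∀ (p : n.Partition), (∀ x ∈ p.parts, x ∈ QminusSet 1 m) →
      (p.parts.filter (fun x => ¬ (x = 1))) ≠ 0 →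
      Multiset.sort ((p.parts.filter (fun x => ¬ (x = 1))).map (codeF m)) (· ≤ ·) ∈ qL7 ∧
        2 * (qfind qL7 (Multiset.sort
          ((p.parts.filter (fun x => ¬ (x = 1))).map (codeF m)) (· ≤ ·)) + 1) + d ≤ n := by
    intro p hp hne
    exact main_aux d N n m hN hd63 hdN hm hn1 hn2 _ (hclassify p hp) (parts_decomp n p).1 hne
  refine Nat.card_le_card_of_injective
    (fun P => if h : (P.1.parts.filter (fun x => ¬ (x = 1))) = 0
      then pOne n d (by omega)
      else pTwo n d (qfind qL7 (Multiset.sort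
          ((P.1.parts.filter (fun x => ¬ (x = 1))).map (codeF m)) (· ≤ ·)) + 1)
        (by omega) (by omega) ((key P.1 P.2 h).2))
    ?_
  intro P₁ P₂ hf
  obtain ⟨p₁, hp₁⟩ := P₁
  obtain ⟨p₂, hp₂⟩ := P₂
  dsimp only at hf
  apply Subtype.ext
  apply Nat.Partition.ext
  by_cases h₁ : (p₁.parts.filter (fun x => ¬ (x = 1))) = 0 <;>
    by_cases h₂ : (p₂.parts.filter (fun x => ¬ (x = 1))) = 0
  · rw [(parts_decomp n p₁).2, (parts_decomp n p₂).2, h₁, h₂]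
  · rw [dif_pos h₁, dif_neg h₂] at hf
    have hc := congrArg (fun z => Multiset.card z.1.parts) hf
    simp [pOne, pTwo] at hc
  · rw [dif_neg h₁, dif_pos h₂] at hf
    have hc := congrArg (fun z => Multiset.card z.1.parts) hf
    simp [pOne, pTwo] at hc
  · rw [dif_neg h₁, dif_neg h₂] at hf
    have hk₁ := key p₁ hp₁ h₁
    have hk₂ := key p₂ hp₂ h₂
    set l₁ := Multiset.sort ((p₁.parts.filter (fun x => ¬ (x = 1))).map (codeF m)) (· ≤ ·)
      with hl₁
    set l₂ := Multiset.sort ((p₂.parts.filter (fun x => ¬ (x = 1))).map (codeF m)) (· ≤ ·)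
      with hl₂
    have hparts := congrArg (fun z => z.1.parts) hf
    simp only [pTwo] at hparts
    have hmem1 : (qfind qL7 l₁ + 1) ∈
        ({qfind qL7 l₂ + 1, n - (qfind qL7 l₂ + 1)} : Multiset ℕ) := by
      rw [← hparts]; simp [l₁]
    have ht : qfind qL7 l₁ = qfind qL7 l₂ := by
      simp only [Multiset.insert_eq_cons, Multiset.mem_cons, Multiset.mem_singleton] at hmem1
      have hb₁ := hk₁.2
      have hb₂ := hk₂.2
      rcases hmem1 with h | h
      · omega
      · omega
    have hll : l₁ = l₂ := by
      have e₁ := qfind_getElem? l₁ qL7 hk₁.1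
      have e₂ := qfind_getElem? l₂ qL7 hk₂.1
      rw [ht] at e₁
      rw [e₂] at e₁
      exact (Option.some.inj e₁).symm
    have hs : p₁.parts.filter (fun x => ¬ (x = 1)) = p₂.parts.filter (fun x => ¬ (x = 1)) := by
      apply code_inj m hm4 _ _ (hclassify p₁ hp₁) (hclassify p₂ hp₂)
      have e₁ : (↑l₁ : Multiset ℕ) = (p₁.parts.filter (fun x => ¬ (x = 1))).map (codeF m) :=
        Multiset.sort_eq _ _
      have e₂ : (↑l₂ : Multiset ℕ) = (p₂.parts.filter (fun x => ¬ (x = 1))).map (codeF m) :=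
        Multiset.sort_eq _ _
      rw [← e₁, ← e₂, hll]
    rw [(parts_decomp n p₁).2, (parts_decomp n p₂).2, hs]
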